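/- Let a_1,…,a_m and b_1,…,b_n be integers all ≥ 2 (with m, n ≥ 1), and suppose every proper suffix of the string (a_1,…,a_m, 1, b_1,…,b_n) has nonzero negative continued fraction value, so that [a_1,…,a_m,1,b_1,…,b_n]⁻ is defined. Then [a_1,…,a_m, 1, b_1,…,b_n]⁻ = 0 if and only if 1/[a_m,…,a_1]⁻ + 1/[b_1,…,b_n]⁻ = 1. -/
import Mathlib


/-- Negative continued fraction: `ncf [a₁,…,a_k] = a₁ - 1/ncf [a₂,…,a_k]` and `ncf [a] = a`
(it is well-defined provided every proper suffix has nonzero value; otherwise the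
junk value `1/0 = 0` of ℚ is used). -/
def ncf : List ℤ → ℚ
  | [] => 0
  | a :: l => (a : ℚ) - 1 / ncf l

lemma ncf_key (a : List ℤ) (ha : a ≠ []) : ∀ (s : List ℤ), ncf s ≠ 0 →
    (∀ u : List ℤ, u ≠ [] → u <:+ a ++ s → u ≠ a ++ s → ncf u ≠ 0) →
    (ncf (a ++ s) = 0 ↔ ncf s = 1 / ncf a.reverse) := by
  induction a using List.reverseRecOn with
  | nil => exact absurd rfl ha
  | append_singleton a' c ih =>
    intro s hs hwd
    rcases eq_or_ne a' [] with rfl | ha'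
    · simp only [List.nil_append, List.reverse_cons, List.reverse_nil]
      show (c : ℚ) - 1 / ncf s = 0 ↔ ncf s = 1 / ncf [c]
      have hc : ncf [c] = (c : ℚ) := by simp [ncf]
      rw [hc]
      constructor
      · intro h
        have h1 : 1 / ncf s = (c : ℚ) := by linarith
        rw [← h1, one_div_one_div]
      · intro h
        rw [h, one_div_one_div]
        ring
    · have hassoc : a' ++ [c] ++ s = a' ++ (c :: s) := by simp
      rw [hassoc]
      have hcs : ncf (c :: s) ≠ 0 := by
        apply hwd (c :: s) (by simp)
        · rw [hassoc]; exact List.suffix_append _ _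
        · rw [hassoc]
          intro h
          have hlen := congrArg List.length h
          simp [List.length_append] at hlen
          exact ha' hlen
      have IH := ih ha' (c :: s) hcs (by
        intro u hu hsuf hne
        exact hwd u hu (by rw [hassoc]; exact hsuf) (by rw [hassoc]; exact hne))
      rw [IH]
      have hrev : ncf ((a' ++ [c]).reverse) = (c : ℚ) - 1 / ncf a'.reverse := by
        rw [List.reverse_append]; rfl
      rw [hrev]
      show (c : ℚ) - 1 / ncf s = 1 / ncf a'.reverse ↔
        ncf s = 1 / ((c : ℚ) - 1 / ncf a'.reverse)
      set x := ncf a'.reverse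
      set t := ncf s
      constructor
      · intro h
        have h1 : 1 / t = (c : ℚ) - 1 / x := by linarith
        rw [← h1, one_div_one_div]
      · intro h
        rw [h, one_div_one_div]
        ring

/-- [a₁,…,a_m,1,b₁,…,b_n]⁻ = 0 iff [a_m,…,a₁]⁻ and [b₁,…,b_n]⁻ are dual to each other. -/
theorem stmt_13 (a b : List ℤ) (ha : a ≠ []) (hb : b ≠ [])
    (h2a : ∀ x ∈ a, 2 ≤ x) (h2b : ∀ x ∈ b, 2 ≤ x)
    (hwd : ∀ s : List ℤ, s ≠ [] → s <:+ (a ++ (1 :: b)) → s ≠ a ++ (1 :: b) → ncf s ≠ 0) :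
    ncf (a ++ (1 :: b)) = 0 ↔ 1 / ncf a.reverse + 1 / ncf b = 1 := by
  have hs : ncf (1 :: b) ≠ 0 := by
    apply hwd _ (by simp) (List.suffix_append _ _)
    intro h
    have hlen := congrArg List.length h
    simp [List.length_append] at hlen
    exact ha hlen
  rw [ncf_key a ha (1 :: b) hs hwd]
  have h1 : ncf (1 :: b) = 1 - 1 / ncf b := by
    show ((1 : ℤ) : ℚ) - 1 / ncf b = _
    push_cast
    ring
  rw [h1]
  constructor <;> intro h <;> linarith
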